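/- Let T be a Trémaux tree of a connected graph G. For every vertex v other than the root with parent edge e = (u,v), the fringe Fringe(e) equals the union over all edges e' outgoing from v of the set {f ∈ Fringe(e') : low(f) ≺ u} together with the non-tree edges (v, w) with w ≺ u, where for a non-tree edge e' outgoing from v, Fringe(e') = {e'} if low(e') ≺ v and ∅ otherwise. -/

import Mathlib

variable {V : Type*}

/-- Tree order: `x ⪯ y` iff `x` lies on the unique `T`-path from the root `r` to `y`. -/
def tle (T : SimpleGraph V) (r x y : V) : Prop :=
  ∃ p : T.Walk r y, p.IsPath ∧ x ∈ p.support

/-- Strict tree order. -/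
def stle (T : SimpleGraph V) (r x y : V) : Prop :=
  tle T r x y ∧ x ≠ y

/-- `T` is a Trémaux tree of `G` rooted at `r`. -/
def IsTremaux (G T : SimpleGraph V) (r : V) : Prop :=
  T ≤ G ∧ T.IsTree ∧ ∀ x y, G.Adj x y → tle T r x y ∨ tle T r y x

/-- A back edge (non-tree edge), oriented downward: `a` is the upper endpoint, `b ≺ a`. -/
def BackEdge (G T : SimpleGraph V) (r a b : V) : Prop :=
  G.Adj a b ∧ ¬ T.Adj a b ∧ stle T r b a

/-- The set of which `low v` is the minimum: `v` together with all vertices joined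
by a non-tree edge to a descendant of `v`. -/
def lowSet (G T : SimpleGraph V) (r v : V) : Set V :=
  {v} ∪ {u | ∃ w, tle T r v w ∧ G.Adj u w ∧ ¬ T.Adj u w}

/-- `l` is the low point of the vertex `v`. -/
def IsLow (G T : SimpleGraph V) (r v l : V) : Prop :=
  l ∈ lowSet G T r v ∧ ∀ u ∈ lowSet G T r v, tle T r l u

/-- The edge from `v` to `w` is an edge going out of `v`: either a tree edge going up,
or a back edge going down. -/
def OutEdge (G T : SimpleGraph V) (r v w : V) : Prop :=
  (T.Adj v w ∧ stle T r v w) ∨ BackEdge G T r v w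

/-- The back edge `(a,b)` lies above the edge `(v,w)` going out of `v`
(i.e. `f ⪰ e` in the order extended to edges). -/
def AboveE (T : SimpleGraph V) (r v w a b : V) : Prop :=
  (T.Adj v w ∧ tle T r w a) ∨ (¬ T.Adj v w ∧ a = v ∧ b = w)

/-- Membership in the fringe of the edge `(v,w)` going out of `v`:
back edges `f = (a,b) ⪰ e` with `low f = b ≺ v`. -/
def InFringe (G T : SimpleGraph V) (r v w a b : V) : Prop :=
  BackEdge G T r a b ∧ AboveE T r v w a b ∧ stle T r b v

/-- The set of which `low e` is the minimum, for an edge `e = (v,w)` going out of `v`. -/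
def lowESet (G T : SimpleGraph V) (r v w : V) : Set V :=
  {u | (T.Adj v w ∧ (u = v ∨ u ∈ lowSet G T r w)) ∨ (¬ T.Adj v w ∧ u = w)}

/-- `l` is the low point of the edge `(v,w)` going out of `v`. -/
def IsLowE (G T : SimpleGraph V) (r v w l : V) : Prop :=
  l ∈ lowESet G T r v w ∧ ∀ u ∈ lowESet G T r v w, tle T r l u

/-- Membership in `Interlaced(e₁, e₂)` where `e₁ = (v,w₁)` and `l₂ = low e₂`:
back edges in the fringe of `e₁` whose low is strictly above `l₂`. -/
def InInterlaced (G T : SimpleGraph V) (r v w₁ l₂ a b : V) : Prop :=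
  InFringe G T r v w₁ a b ∧ stle T r l₂ b

/-- `c` is an F-coloring of the back edges of `(G,T)` by `{-1,+1}`. -/
def FColoring (G T : SimpleGraph V) (r : V) (c : V → V → ℤ) : Prop :=
  (∀ a b, BackEdge G T r a b → c a b = 1 ∨ c a b = -1) ∧
  ∀ v w₁ w₂ l₁ l₂, OutEdge G T r v w₁ → OutEdge G T r v w₂ → w₁ ≠ w₂ →
    IsLowE G T r v w₁ l₁ → IsLowE G T r v w₂ l₂ →
    (∀ a b a' b', InInterlaced G T r v w₁ l₂ a b →
        InInterlaced G T r v w₁ l₂ a' b' → c a b = c a' b') ∧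
    (∀ a b a' b', InInterlaced G T r v w₂ l₁ a b →
        InInterlaced G T r v w₂ l₁ a' b' → c a b = c a' b') ∧
    (∀ a b a' b', InInterlaced G T r v w₁ l₂ a b →
        InInterlaced G T r v w₂ l₁ a' b' → c a b ≠ c a' b')

/-- A strong F-coloring additionally makes each low set `L(v)` monochromatic. -/
def StrongAtLows (G T : SimpleGraph V) (r : V) (c : V → V → ℤ) : Prop :=
  ∀ v l, IsLow G T r v l →
    ∀ a b a' b', BackEdge G T r a b → tle T r v a → b = l →
      BackEdge G T r a' b' → tle T r v a' → b' = l → c a b = c a' b'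

/-- `H` is a minor of `G` (branch-set formulation). -/
def IsMinorOf {W V : Type*} (H : SimpleGraph W) (G : SimpleGraph V) : Prop :=
  ∃ ρ : V → Option W,
    (∀ w, ∃ v, ρ v = some w) ∧
    (∀ w, (G.induce {v | ρ v = some w}).Connected) ∧
    (∀ w₁ w₂, H.Adj w₁ w₂ → ∃ v₁ v₂, ρ v₁ = some w₁ ∧ ρ v₂ = some w₂ ∧ G.Adj v₁ v₂)

/-- Planarity (Kuratowski–Wagner characterization): no `K₅` and no `K₃,₃` minor. -/
def Planar (G : SimpleGraph V) : Prop :=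
  ¬ IsMinorOf (SimpleGraph.completeGraph (Fin 5)) G ∧
  ¬ IsMinorOf (completeBipartiteGraph (Fin 3) (Fin 3)) G

open SimpleGraph

lemma aux_path_unique [DecidableEq V] {T : SimpleGraph V} (hT : T.IsTree) {x y : V}
    (p q : T.Walk x y) (hp : p.IsPath) (hq : q.IsPath) : p = q := by
  obtain ⟨w, -, hw⟩ := hT.existsUnique_path x y
  rw [hw p hp, hw q hq]

lemma tle_refl [DecidableEq V] {T : SimpleGraph V} (hT : T.IsTree) (r v : V) : tle T r v v := by
  obtain ⟨p⟩ := hT.isConnected.preconnected r v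
  exact ⟨p.toPath.1, p.toPath.2, Walk.end_mem_support _⟩

lemma tle_trans [DecidableEq V] {T : SimpleGraph V} (hT : T.IsTree) {r x y z : V}
    (hxy : tle T r x y) (hyz : tle T r y z) : tle T r x z := by
  obtain ⟨p, hp, hx⟩ := hxy
  obtain ⟨q, hq, hy⟩ := hyz
  have := aux_path_unique hT (q.takeUntil y hy) p (hq.takeUntil hy) hp
  refine ⟨q, hq, ?_⟩
  exact Walk.support_takeUntil_subset q hy (this ▸ hx)

lemma tle_antisymm [DecidableEq V] {T : SimpleGraph V} (hT : T.IsTree) {r x y : V}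
    (hxy : tle T r x y) (hyx : tle T r y x) : x = y := by
  by_contra hne
  obtain ⟨p, hp, hx⟩ := hxy
  obtain ⟨q, hq, hy⟩ := hyx
  have heq := aux_path_unique hT (p.takeUntil x hx) q (hp.takeUntil hx) hq
  have hy' : y ∈ (p.takeUntil x hx).support := heq ▸ hy
  have hspec := p.take_spec hx
  have hnd : p.support.Nodup := hp.support_nodup
  rw [← hspec, Walk.support_append] at hnd
  have hy2 : y ∈ (p.dropUntil x hx).support.tail := by
    cases hd : p.dropUntil x hx with
    | nil => exact absurd rfl hne
    | cons h q' => simpa using Walk.end_mem_support q'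
  exact (List.disjoint_of_nodup_append hnd) hy' hy2

lemma exists_child [DecidableEq V] {T : SimpleGraph V} (hT : T.IsTree) {r v a : V}
    (hva : tle T r v a) (hne : v ≠ a) :
    ∃ w, T.Adj v w ∧ stle T r v w ∧ tle T r w a := by
  obtain ⟨p, hp, hv⟩ := hva
  have hspec := p.take_spec hv
  cases hd : p.dropUntil v hv with
  | nil => exact absurd rfl hne
  | cons hadj q' =>
    rename_i w
    have hwp : w ∈ p.support := by
      have : w ∈ (p.dropUntil v hv).support := by rw [hd]; simp
      exact Walk.support_dropUntil_subset p hv this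
    have hnd : p.support.Nodup := hp.support_nodup
    rw [← hspec, Walk.support_append, hd] at hnd
    have hwtail : w ∈ (Walk.cons hadj q').support.tail := by simp
    have hwnot : w ∉ (p.takeUntil v hv).support :=
      fun hw => (List.disjoint_of_nodup_append hnd) hw hwtail
    have htp : (p.takeUntil v hv).IsPath := hp.takeUntil hv
    have hcp : ((p.takeUntil v hv).concat hadj).IsPath := by
      have : ((p.takeUntil v hv).concat hadj).reverse.IsPath := by
        rw [Walk.reverse_concat]
        rw [Walk.cons_isPath_iff]
        exact ⟨htp.reverse, by rwa [Walk.support_reverse, List.mem_reverse]⟩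
      simpa only [Walk.reverse_reverse] using this.reverse
    refine ⟨w, hadj, ⟨⟨_, hcp, ?_⟩, hadj.ne⟩, ⟨p, hp, hwp⟩⟩
    rw [Walk.concat_eq_append, Walk.mem_support_append_iff]
    left; exact Walk.end_mem_support _

/-- decomposition of the fringe of the parent edge `(u,v)` of `v`:
it is the union, over edges `e'` going out of `v`, of the back edges of
`Fringe(e')` with low `≺ u`, together with the back edges `(v,w)` with `w ≺ u`. -/
theorem stmt17 [Fintype V] (G T : SimpleGraph V) (r : V)
    (h : IsTremaux G T r) (u v : V) (he : T.Adj u v) (huv : stle T r u v) :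
    ∀ a b, (BackEdge G T r a b ∧ tle T r v a ∧ stle T r b u) ↔
      ((∃ w, OutEdge G T r v w ∧ InFringe G T r v w a b ∧ stle T r b u) ∨
        (BackEdge G T r a b ∧ a = v ∧ stle T r b u)) := by
  classical
  have hT : T.IsTree := h.2.1
  intro a b
  constructor
  · rintro ⟨hb, hva, hbu⟩
    by_cases hav : a = v
    · exact Or.inr ⟨hb, hav, hbu⟩
    · obtain ⟨w, hadj, hsvw, hwa⟩ := exists_child hT hva (Ne.symm hav)
      have hbv : stle T r b v :=
        ⟨tle_trans hT hbu.1 huv.1,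
         fun hbv => huv.2 (tle_antisymm hT huv.1 (hbv ▸ hbu.1))⟩
      exact Or.inl ⟨w, Or.inl ⟨hadj, hsvw⟩, ⟨hb, Or.inl ⟨hadj, hwa⟩, hbv⟩, hbu⟩
  · rintro (⟨w, how, ⟨hb, hab, hbv⟩, hbu⟩ | ⟨hb, hav, hbu⟩)
    · refine ⟨hb, ?_, hbu⟩
      rcases hab with ⟨hvw, hwa⟩ | ⟨-, ha, -⟩
      · rcases how with ⟨-, hsvw⟩ | hbe
        · exact tle_trans hT hsvw.1 hwa
        · exact absurd hvw hbe.2.1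
      · exact ha ▸ tle_refl hT r v
    · subst hav
      exact ⟨hb, tle_refl hT r a, hbu⟩
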